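/- If there exists ν ∈ (0,1) with ‖I - νA‖ < 1 - ν, then the absolute value equation Ax - |x| = b has a unique solution for every b ∈ ℝ^n. -/

import Mathlib

open Matrix

/-- Componentwise absolute value of a vector. -/
def vecAbs {n : ℕ} (x : EuclideanSpace ℝ (Fin n)) : EuclideanSpace ℝ (Fin n) :=
  WithLp.toLp 2 (fun i => |x i|)

/-- The operator 2-norm of a matrix. -/
noncomputable def opNorm {n : ℕ} (A : Matrix (Fin n) (Fin n) ℝ) : ℝ :=
  ‖LinearMap.toContinuousLinearMap (Matrix.toEuclideanLin A)‖

/-- Componentwise absolute value is 1-Lipschitz in the Euclidean norm. -/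
lemma vecAbs_lip {n : ℕ} (x y : EuclideanSpace ℝ (Fin n)) :
    ‖vecAbs x - vecAbs y‖ ≤ ‖x - y‖ := by
  rw [EuclideanSpace.norm_eq, EuclideanSpace.norm_eq]
  apply Real.sqrt_le_sqrt
  apply Finset.sum_le_sum
  intro i _
  have h1 : |(vecAbs x - vecAbs y) i| ≤ |(x - y) i| := by
    simp only [vecAbs, PiLp.sub_apply]
    exact abs_abs_sub_abs_le_abs_sub (x i) (y i)
  exact pow_le_pow_left₀ (abs_nonneg _) h1 2

/-- If there exists `ν ∈ (0,1)` with `‖I - νA‖ < 1 - ν`, then the AVE `Ax - |x| = b`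
has a unique solution for every `b`. -/
theorem ave_unique_solution (n : ℕ) (A : Matrix (Fin n) (Fin n) ℝ)
    (h : ∃ ν ∈ Set.Ioo (0 : ℝ) 1, opNorm (1 - ν • A) < 1 - ν) :
    ∀ b : EuclideanSpace ℝ (Fin n),
      ∃! x : EuclideanSpace ℝ (Fin n), Matrix.toEuclideanLin A x - vecAbs x = b := by
  obtain ⟨ν, ⟨hν0, hν1⟩, hlt⟩ := h
  intro b
  set L := LinearMap.toContinuousLinearMap (Matrix.toEuclideanLin (1 - ν • A)) with hLdef
  set T : EuclideanSpace ℝ (Fin n) → EuclideanSpace ℝ (Fin n) :=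
    fun x => L x + ν • vecAbs x + ν • b with hTdef
  have hLnorm : (0:ℝ) ≤ ‖L‖ := norm_nonneg _
  -- `T` is Lipschitz with constant `‖L‖ + ν < 1`
  have hlip : ∀ x y, dist (T x) (T y) ≤ (‖L‖ + ν) * dist x y := by
    intro x y
    rw [dist_eq_norm, dist_eq_norm]
    have : T x - T y = L (x - y) + ν • (vecAbs x - vecAbs y) := by
      simp only [hTdef, map_sub, smul_sub]
      abel
    rw [this, add_mul]
    refine (norm_add_le _ _).trans (add_le_add ?_ ?_)
    · exact L.le_opNorm _
    · rw [norm_smul, Real.norm_eq_abs, abs_of_pos hν0]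
      exact mul_le_mul_of_nonneg_left (vecAbs_lip x y) hν0.le
  set K : NNReal := ⟨‖L‖ + ν, by positivity⟩ with hKdef
  have hK1 : K < 1 := by
    rw [← NNReal.coe_lt_coe]
    push_cast
    simp only [hKdef, NNReal.coe_mk]
    have : opNorm (1 - ν • A) = ‖L‖ := rfl
    show ‖L‖ + ν < 1
    linarith [this ▸ hlt]
  have hcon : ContractingWith K T :=
    ⟨hK1, LipschitzWith.of_dist_le_mul fun x y => hlip x y⟩
  -- solutions of the AVE are exactly fixed points of `T`
  have hiff : ∀ x, (Matrix.toEuclideanLin A x - vecAbs x = b) ↔ Function.IsFixedPt T x := by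
    intro x
    have hLx : L x = x - ν • (Matrix.toEuclideanLin A x) := by
      simp only [hLdef, LinearMap.coe_toContinuousLinearMap', map_sub, _root_.map_smul,
        LinearMap.sub_apply, LinearMap.smul_apply]
      ext i
      simp [Matrix.toEuclideanLin_apply, Matrix.one_mulVec]
    constructor
    · intro hx
      show T x = x
      simp only [hTdef, hLx]
      rw [← hx]
      module
    · intro hx
      have hx' : L x + ν • vecAbs x + ν • b = x := hx
      rw [hLx] at hx'
      have hz : ν • (Matrix.toEuclideanLin A x - vecAbs x - b) = 0 := by
        have h0 := hx'
        rw [← sub_eq_zero] at h0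
        rw [← neg_eq_zero, ← h0]
        module
      rcases smul_eq_zero.mp hz with h2 | h2
      · exact absurd h2 (ne_of_gt hν0)
      · exact sub_eq_zero.mp h2
  have := hcon.fixedPoint_isFixedPt
  refine ⟨hcon.fixedPoint T, (hiff _).mpr this, fun y hy => ?_⟩
  exact hcon.fixedPoint_unique ((hiff y).mp hy)
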